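/- arXiv:2109.11805 — 2 statements merged into one kernel-verified Lean document; each statement's English description precedes it below -/
import Mathlib

section
/- With notation as above, the natural k[t, β]-algebra homomorphism k[t, β_1,...,β_n] → k[t, α, β]/F(t·x+y)^⊥ is surjective with kernel equal to F(y)^⊥·k[t, β]; hence k[t, α, β]/F(t·x+y)^⊥ ≅ k[t, β]/F(y)^⊥ as k[t, β]-algebras. -/
open MvPolynomial

/-- Composition of powers of the operators `op i`, with multiplicities given by `m`. -/
noncomputable def opPow {k : Type*} [CommSemiring k] {σ : Type*}
    (op : σ → Module.End k (MvPolynomial σ k)) (m : σ →₀ ℕ) :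
    Module.End k (MvPolynomial σ k) :=
  m.support.toList.foldr (fun i L => (op i) ^ (m i) * L) 1

/-- The action of a "differential polynomial" `h` on `F`, each variable of `h` acting by the
operator `op i`. -/
noncomputable def apAct {k : Type*} [CommSemiring k] {σ : Type*}
    (op : σ → Module.End k (MvPolynomial σ k)) (h F : MvPolynomial σ k) : MvPolynomial σ k :=
  h.support.sum fun m => (h.coeff m) • (opPow op m F)

/-- Apolarity contraction `h ∘ F`: each variable of `h` acts as the corresponding partial
derivative. -/
noncomputable def apContract {k : Type*} [CommSemiring k] {σ : Type*} [DecidableEq σ]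
    (h F : MvPolynomial σ k) : MvPolynomial σ k :=
  apAct (fun i => (pderiv i).toLinearMap) h F

/-- The operators for the relative apolarity action on `k[t, z…]` (with `t = X none`):
`t` acts by multiplication and every other variable acts as its partial derivative. -/
noncomputable def tOp {k : Type*} [CommSemiring k] {τ : Type*} [DecidableEq τ] :
    Option τ → Module.End k (MvPolynomial (Option τ) k)
  | none => LinearMap.mulLeft k (X none)
  | some v => (pderiv (some v)).toLinearMap

/-- Relative apolarity action of `k[t, α…]` on `k[t, x…]`: `t` acts by multiplication, and the
variable `some v` acts as `∂/∂(X (some v))`. -/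
noncomputable def tAct {k : Type*} [CommSemiring k] {τ : Type*} [DecidableEq τ]
    (h F : MvPolynomial (Option τ) k) : MvPolynomial (Option τ) k :=
  apAct tOp h F


section ApAct
variable {k : Type*} [CommSemiring k] {σ : Type*}

lemma foldr_mul_eq_prod {M : Type*} [Monoid M] (g : σ → M) (l : List σ) :
    l.foldr (fun i L => g i * L) 1 = (l.map g).prod := by
  induction l with
  | nil => simp
  | cons a l ih => simp [ih]

lemma opPow_eq_list_prod (op : σ → Module.End k (MvPolynomial σ k)) (m : σ →₀ ℕ) :
    opPow op m = (m.support.toList.map fun i => op i ^ m i).prod :=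
  foldr_mul_eq_prod _ _

lemma apAct_def (op : σ → Module.End k (MvPolynomial σ k)) (h F : MvPolynomial σ k) :
    apAct op h F = (AddMonoidAlgebra.coeff h).sum fun m c => c • opPow op m F := rfl

lemma apAct_monomial (op : σ → Module.End k (MvPolynomial σ k)) (m : σ →₀ ℕ) (c : k)
    (F : MvPolynomial σ k) : apAct op (monomial m c) F = c • opPow op m F := by
  rw [apAct_def, sum_monomial_eq]
  simp

lemma apAct_add (op : σ → Module.End k (MvPolynomial σ k)) (h₁ h₂ F : MvPolynomial σ k) :
    apAct op (h₁ + h₂) F = apAct op h₁ F + apAct op h₂ F := by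
  rw [apAct_def, apAct_def, apAct_def, AddMonoidAlgebra.coeff_add]
  exact Finsupp.sum_add_index' (fun m => by simp) (fun m c₁ c₂ => by rw [add_smul])

lemma opPow_zero (op : σ → Module.End k (MvPolynomial σ k)) : opPow op 0 = 1 := by
  simp [opPow]

lemma apAct_C (op : σ → Module.End k (MvPolynomial σ k)) (c : k) (F : MvPolynomial σ k) :
    apAct op (C c) F = c • F := by
  rw [← monomial_zero', apAct_monomial, opPow_zero]; rfl

variable (op : σ → Module.End k (MvPolynomial σ k))

lemma apAct_eq_aeval (hc : ∀ i j, Commute (op i) (op j)) (h F : MvPolynomial σ k) :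
    letI : CommSemiring (Algebra.adjoin k (Set.range op)) :=
      Algebra.adjoinCommSemiringOfComm k
        (by rintro _ ⟨i, rfl⟩ _ ⟨j, rfl⟩; exact hc i j)
    apAct op h F = ((aeval (fun i => (⟨op i, Algebra.subset_adjoin ⟨i, rfl⟩⟩ :
        Algebra.adjoin k (Set.range op))) h : Algebra.adjoin k (Set.range op)) :
        Module.End k (MvPolynomial σ k)) F := by
  letI : CommSemiring (Algebra.adjoin k (Set.range op)) :=
    Algebra.adjoinCommSemiringOfComm k
      (by rintro _ ⟨i, rfl⟩ _ ⟨j, rfl⟩; exact hc i j)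
  induction h using MvPolynomial.induction_on' with
  | monomial m c =>
    rw [apAct_monomial, aeval_monomial, opPow_eq_list_prod]
    have hval : (((m.prod fun i e => (⟨op i, Algebra.subset_adjoin ⟨i, rfl⟩⟩ :
        Algebra.adjoin k (Set.range op)) ^ e) : Algebra.adjoin k (Set.range op)) :
        Module.End k (MvPolynomial σ k))
        = (m.support.toList.map fun i => op i ^ m i).prod := by
      simp only [Finsupp.prod]
      rw [← Finset.prod_map_toList]
      rw [show ((↑) : Algebra.adjoin k (Set.range op) → Module.End k (MvPolynomial σ k))
        = (Algebra.adjoin k (Set.range op)).val from rfl, map_list_prod, List.map_map]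
      rfl
    rw [Subalgebra.coe_mul, Module.End.mul_apply, hval]
    simp [Algebra.algebraMap_eq_smul_one]
  | add p q hp hq =>
    rw [apAct_add, map_add, hp, hq]
    simp

lemma apAct_mul (hc : ∀ i j, Commute (op i) (op j)) (g h F : MvPolynomial σ k) :
    apAct op (g * h) F = apAct op g (apAct op h F) := by
  letI : CommSemiring (Algebra.adjoin k (Set.range op)) :=
    Algebra.adjoinCommSemiringOfComm k
      (by rintro _ ⟨i, rfl⟩ _ ⟨j, rfl⟩; exact hc i j)
  rw [apAct_eq_aeval op hc, apAct_eq_aeval op hc g, apAct_eq_aeval op hc h, map_mul,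
    Subalgebra.coe_mul, Module.End.mul_apply]

lemma apAct_X (hc : ∀ i j, Commute (op i) (op j)) (i : σ) (F : MvPolynomial σ k) : apAct op (X i) F = op i F := by
  letI : CommSemiring (Algebra.adjoin k (Set.range op)) :=
    Algebra.adjoinCommSemiringOfComm k
      (by rintro _ ⟨i, rfl⟩ _ ⟨j, rfl⟩; exact hc i j)
  rw [apAct_eq_aeval op hc, aeval_X]

end ApAct

section Comm
variable {k : Type*} [CommSemiring k]

lemma apAct_zero_left {σ : Type*} (op : σ → Module.End k (MvPolynomial σ k))
    (F : MvPolynomial σ k) : apAct op 0 F = 0 := by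
  rw [apAct_def]; exact Finsupp.sum_zero_index

lemma apAct_zero_right {σ : Type*} (op : σ → Module.End k (MvPolynomial σ k))
    (h : MvPolynomial σ k) : apAct op h 0 = 0 := by
  rw [apAct_def]; simp [Finsupp.sum]

lemma apAct_one {σ : Type*} (op : σ → Module.End k (MvPolynomial σ k))
    (F : MvPolynomial σ k) : apAct op 1 F = F := by
  rw [show (1 : MvPolynomial σ k) = C 1 from rfl, apAct_C, one_smul]

lemma apAct_sum {σ ι : Type*} (op : σ → Module.End k (MvPolynomial σ k))
    (s : Finset ι) (f : ι → MvPolynomial σ k) (F : MvPolynomial σ k) :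
    apAct op (∑ i ∈ s, f i) F = ∑ i ∈ s, apAct op (f i) F := by
  classical
  induction s using Finset.induction_on with
  | empty => simp [apAct_zero_left]
  | insert a s hni ih => rw [Finset.sum_insert hni, Finset.sum_insert hni,
      apAct_add, ih]

lemma pderiv_endo_comm {σ : Type*} [DecidableEq σ] (i j : σ) :
    Commute ((pderiv i).toLinearMap : Module.End k (MvPolynomial σ k))
      (pderiv j).toLinearMap := by
  rcases eq_or_ne i j with rfl | hij
  · rfl
  · apply LinearMap.ext; intro p
    induction p using MvPolynomial.induction_on' with
    | monomial m c =>
      simp only [Module.End.mul_apply, Derivation.coeFn_coe, pderiv_monomial,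
        Finsupp.tsub_apply, Finsupp.single_eq_of_ne hij, Finsupp.single_eq_of_ne hij.symm,
        tsub_zero]
      rw [tsub_right_comm]
      ring_nf
    | add p q hp hq =>
      simp only [Module.End.mul_apply, map_add] at hp hq ⊢
      rw [hp, hq]

lemma tOp_comm {τ : Type*} [DecidableEq τ] (i j : Option τ) :
    Commute (tOp (k := k) i) (tOp j) := by
  have key : ∀ w : τ, Commute (tOp (k := k) (τ := τ) none) (tOp (some w)) := by
    intro w
    apply LinearMap.ext; intro p
    simp only [tOp, Module.End.mul_apply, LinearMap.mulLeft_apply, Derivation.coeFn_coe,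
      pderiv_mul, pderiv_X_of_ne (show (none : Option τ) ≠ some w by simp)]
    ring
  match i, j with
  | none, none => exact Commute.refl _
  | some v, some w => exact pderiv_endo_comm _ _
  | none, some w => exact key w
  | some v, none => exact (key v).symm

lemma apAct_sub {σ : Type*} {k : Type*} [CommRing k]
    (op : σ → Module.End k (MvPolynomial σ k)) (g h F : MvPolynomial σ k) :
    apAct op (g - h) F = apAct op g F - apAct op h F := by
  have := apAct_add op (g - h) h F
  rw [sub_add_cancel] at this
  rw [this]; ring

end Comm

section Chain
variable {k : Type*} [CommSemiring k] {n : ℕ}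

/-- The substitution `x_i ↦ t·x_i + y_i`. -/
noncomputable def theta (k : Type*) [CommSemiring k] (n : ℕ) :
    MvPolynomial (Fin n) k →ₐ[k] MvPolynomial (Option (Fin n ⊕ Fin n)) k :=
  aeval fun i => X none * X (some (Sum.inl i)) + X (some (Sum.inr i))

lemma theta_X (i : Fin n) :
    theta k n (X i) = X none * X (some (Sum.inl i)) + X (some (Sum.inr i)) := by
  simp [theta]

lemma pderiv_theta_inr (i : Fin n) (p : MvPolynomial (Fin n) k) :
    pderiv (some (Sum.inr i)) (theta k n p) = theta k n (pderiv i p) := by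
  induction p using MvPolynomial.induction_on with
  | C a => simp [theta]
  | add p q hp hq => simp only [map_add, hp, hq]
  | mul_X p j ih =>
    have hXj : pderiv (some (Sum.inr i)) (theta k n (X j))
        = theta k n (pderiv i (X j)) := by
      rcases eq_or_ne i j with rfl | hij
      · rw [theta_X]; simp
      · rw [theta_X]; simp [Ne.symm hij, hij]
    simp only [map_mul, map_add, pderiv_mul, ih, hXj]

lemma pderiv_theta_inl (i : Fin n) (p : MvPolynomial (Fin n) k) :
    pderiv (some (Sum.inl i)) (theta k n p) = X none * theta k n (pderiv i p) := by
  induction p using MvPolynomial.induction_on with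
  | C a => simp [theta]
  | add p q hp hq => simp only [map_add, hp, hq]; ring
  | mul_X p j ih =>
    have hXj : pderiv (some (Sum.inl i)) (theta k n (X j))
        = X none * theta k n (pderiv i (X j)) := by
      rcases eq_or_ne i j with rfl | hij
      · rw [theta_X]; simp
      · rw [theta_X]; simp [Ne.symm hij, hij]
    simp only [map_mul, map_add, pderiv_mul, ih, hXj]
    ring

/-- Key compatibility: the action of a `β`-only differential polynomial on `F(t·x+y)`
computes the plain apolar contraction, substituted. -/
lemma tAct_embed (h : MvPolynomial (Fin n) k) (p : MvPolynomial (Fin n) k) :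
    tAct (aeval (fun i : Fin n => (X (some (Sum.inr i)) : MvPolynomial (Option (Fin n ⊕ Fin n)) k)) h)
      (theta k n p) = theta k n (apContract h p) := by
  induction h using MvPolynomial.induction_on generalizing p with
  | C a => rw [aeval_C, algebraMap_eq]; unfold tAct apContract
           rw [apAct_C, apAct_C, map_smul]
  | add f g hf hg => rw [map_add]; unfold tAct apContract at *
                     rw [apAct_add, apAct_add, hf, hg, map_add]
  | mul_X f i ih =>
    rw [map_mul, aeval_X]
    unfold tAct apContract at *
    rw [apAct_mul _ tOp_comm, apAct_mul _ (fun a b => pderiv_endo_comm a b),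
      apAct_X _ tOp_comm, apAct_X _ (fun a b => pderiv_endo_comm a b)]
    show apAct tOp _ (pderiv (some (Sum.inr i)) (theta k n p)) = _
    rw [pderiv_theta_inr, ih]
    rfl

end Chain

/-- The natural map `k[t,β] → k[t,α,β]/F(t·x+y)^⊥` is surjective, its kernel is the ideal
generated by `F(y)^⊥`, and hence `k[t,α,β]/F(t·x+y)^⊥ ≅ k[t,β]/F(y)^⊥`. Here
`k[t,α,β] = k[t,x,y] = MvPolynomial (Option (Fin n ⊕ Fin n)) k` with `t = X none`,
`α_i = x_i = X (some (Sum.inl i))`, `β_i = y_i = X (some (Sum.inr i))`;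
`k[t,β] = MvPolynomial (Option (Fin n)) k` with `t = X none`, `β_i = X (some i)`; and the
annihilators are taken for the relative apolarity action (`t` acts by multiplication, the
other variables by partial differentiation). -/
theorem quotient_by_perp_shifted {k : Type*} [Field k] [CharZero k] {n : ℕ}
    (F : MvPolynomial (Fin n) k) (hF : F.IsHomogeneous 3) :
    letI B := MvPolynomial (Option (Fin n ⊕ Fin n)) k
    letI Small := MvPolynomial (Option (Fin n)) k
    letI G : B := aeval (fun i : Fin n =>
      (X none * X (some (Sum.inl i)) + X (some (Sum.inr i)) : B)) F
    letI J : Ideal B := Ideal.span {h : B | tAct h G = 0}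
    letI ψ : Small →ₐ[k] B ⧸ J := (Ideal.Quotient.mkₐ k J).comp
      (aeval fun v : Option (Fin n) =>
        (v.elim (X none) fun i => X (some (Sum.inr i)) : B))
    letI K : Ideal Small := Ideal.span
      ((aeval fun i : Fin n => (X (some i) : Small)) ''
        {h : MvPolynomial (Fin n) k | apContract h F = 0})
    Function.Surjective ψ ∧ RingHom.ker ψ.toRingHom = K
      ∧ Nonempty ((Small ⧸ K) ≃ₐ[k] (B ⧸ J)) := by
  classical
  set G : MvPolynomial (Option (Fin n ⊕ Fin n)) k := aeval (fun i : Fin n =>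
    (X none * X (some (Sum.inl i)) + X (some (Sum.inr i)) :
      MvPolynomial (Option (Fin n ⊕ Fin n)) k)) F with hGdef
  set J : Ideal (MvPolynomial (Option (Fin n ⊕ Fin n)) k) :=
    Ideal.span {h | tAct h G = 0} with hJdef
  have hG : G = theta k n F := rfl
  -- the embedding `k[t,β] → k[t,α,β]`
  set φ₀ : MvPolynomial (Option (Fin n)) k →ₐ[k] MvPolynomial (Option (Fin n ⊕ Fin n)) k :=
    aeval fun v : Option (Fin n) =>
      (v.elim (X none) fun i => X (some (Sum.inr i)) :
        MvPolynomial (Option (Fin n ⊕ Fin n)) k) with hφ₀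
  set K : Ideal (MvPolynomial (Option (Fin n)) k) := Ideal.span
    ((aeval fun i : Fin n => (X (some i) : MvPolynomial (Option (Fin n)) k)) ''
      {h : MvPolynomial (Fin n) k | apContract h F = 0}) with hKdef
  set ψ : MvPolynomial (Option (Fin n)) k →ₐ[k]
      MvPolynomial (Option (Fin n ⊕ Fin n)) k ⧸ J :=
    (Ideal.Quotient.mkₐ k J).comp φ₀ with hψdef
  have hψ : ∀ s, ψ s = Ideal.Quotient.mk J (φ₀ s) := fun s => rfl
  -- the β-only inclusion of `k[x]` into `B`
  set A2 : MvPolynomial (Fin n) k →ₐ[k] MvPolynomial (Option (Fin n ⊕ Fin n)) k :=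
    aeval fun i : Fin n => (X (some (Sum.inr i)) :
      MvPolynomial (Option (Fin n ⊕ Fin n)) k) with hA2
  -- membership in J is exactly annihilation
  have hmem : ∀ h : MvPolynomial (Option (Fin n ⊕ Fin n)) k, h ∈ J ↔ tAct h G = 0 := by
    intro h
    constructor
    · intro hh
      refine Submodule.span_induction (p := fun x _ => tAct x G = 0)
        (fun x hx => hx) ?_ ?_ ?_ hh
      · exact apAct_zero_left _ _
      · intro x y _ _ hx hy
        show tAct (x + y) G = 0
        unfold tAct at *
        rw [apAct_add, hx, hy, add_zero]
      · intro a x _ hx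
        show tAct (a • x) G = 0
        rw [smul_eq_mul]
        unfold tAct at *
        rw [apAct_mul _ tOp_comm, hx, apAct_zero_right]
    · exact fun h0 => Ideal.subset_span h0
  -- the basic relations `x_i - t·y_i ∈ J`
  have hgen : ∀ i : Fin n,
      (X (some (Sum.inl i)) : MvPolynomial (Option (Fin n ⊕ Fin n)) k)
        - X none * X (some (Sum.inr i)) ∈ J := by
    intro i
    apply Ideal.subset_span
    show tAct _ G = 0
    unfold tAct
    rw [apAct_sub, apAct_X _ tOp_comm, apAct_mul _ tOp_comm, apAct_X _ tOp_comm,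
      apAct_X _ tOp_comm]
    show (pderiv (some (Sum.inl i))) G
      - (LinearMap.mulLeft k (X none)) ((pderiv (some (Sum.inr i))) G) = 0
    rw [hG, pderiv_theta_inl, pderiv_theta_inr, LinearMap.mulLeft_apply, sub_self]
  -- surjectivity
  have hsurj : Function.Surjective ψ := by
    set π : MvPolynomial (Option (Fin n ⊕ Fin n)) k →ₐ[k] MvPolynomial (Option (Fin n)) k :=
      aeval fun v : Option (Fin n ⊕ Fin n) =>
        (v.elim (X none) (Sum.elim (fun i => X none * X (some i)) fun i => X (some i)) :
          MvPolynomial (Option (Fin n)) k) with hπ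
    have key : ∀ b : MvPolynomial (Option (Fin n ⊕ Fin n)) k, b - φ₀ (π b) ∈ J := by
      intro b
      induction b using MvPolynomial.induction_on with
      | C a => rw [show π (C a) = C a by simp [hπ], show φ₀ (C a) = C a by simp [hφ₀],
          sub_self]; exact J.zero_mem
      | add p q hp hq =>
        have : p + q - φ₀ (π (p + q)) = (p - φ₀ (π p)) + (q - φ₀ (π q)) := by
          rw [map_add, map_add]; ring
        rw [this]; exact J.add_mem hp hq
      | mul_X p v ih =>
        have hv : (X v : MvPolynomial (Option (Fin n ⊕ Fin n)) k) - φ₀ (π (X v)) ∈ J := by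
          match v with
          | none =>
            rw [show π (X (none : Option (Fin n ⊕ Fin n))) = X none by simp [hπ],
              show φ₀ (X (none : Option (Fin n))) = X none by simp [hφ₀], sub_self]
            exact J.zero_mem
          | some (Sum.inl i) =>
            rw [show π (X (some (Sum.inl i))) = X none * X (some i) by simp [hπ],
              show φ₀ ((X none : MvPolynomial (Option (Fin n)) k) * X (some i))
                  = X none * X (some (Sum.inr i)) by
                simp [hφ₀]]
            exact hgen i
          | some (Sum.inr i) =>
            rw [show π (X (some (Sum.inr i))) = X (some i) by simp [hπ],
              show φ₀ (X (some i) : MvPolynomial (Option (Fin n)) k) = X (some (Sum.inr i)) by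
                simp [hφ₀], sub_self]
            exact J.zero_mem
        have : p * X v - φ₀ (π (p * X v))
            = p * (X v - φ₀ (π (X v))) + (p - φ₀ (π p)) * φ₀ (π (X v)) := by
          rw [map_mul, map_mul]; ring
        rw [this]
        exact J.add_mem (Ideal.mul_mem_left _ _ hv) (Ideal.mul_mem_right _ _ ih)
    intro q
    obtain ⟨b, rfl⟩ := Ideal.Quotient.mk_surjective (I := J) q
    refine ⟨π b, ?_⟩
    rw [hψ, Ideal.Quotient.eq]
    have := J.neg_mem (key b)
    simpa using this
  -- φ₀ composed with the β-inclusion of `k[x]`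
  have hren : ∀ q : MvPolynomial (Fin n) k,
      (rename (some : Fin n → Option (Fin n))) q
        = aeval (fun i : Fin n => (X (some i) : MvPolynomial (Option (Fin n)) k)) q :=
    fun q => by rw [← aeval_X_left_apply (rename some q), aeval_rename]; rfl
  have hcomp : ∀ h : MvPolynomial (Fin n) k,
      φ₀ (aeval (fun i : Fin n => (X (some i) : MvPolynomial (Option (Fin n)) k)) h) = A2 h := by
    intro h
    have : φ₀.comp (aeval fun i : Fin n => (X (some i) : MvPolynomial (Option (Fin n)) k))
        = A2 := by
      apply MvPolynomial.algHom_ext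
      intro i
      simp [hφ₀, hA2]
    exact congrFun (congrArg (DFunLike.coe) this) h
  -- kernel computation
  have hker : RingHom.ker ψ.toRingHom = K := by
    ext s
    have : ψ.toRingHom s = ψ s := rfl
    rw [RingHom.mem_ker, this, hψ, Ideal.Quotient.eq_zero_iff_mem, hmem]
    constructor
    · -- hard direction : annihilation implies membership in K
      intro h0
      set P := (optionEquivLeft k (Fin n)) s with hPdef
      have hrs : ∀ q : MvPolynomial (Fin n) k,
          (optionEquivLeft k (Fin n)) (rename some q) = Polynomial.C q := by
        intro q
        induction q using MvPolynomial.induction_on with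
        | C a => rw [rename_C, optionEquivLeft_C]
        | add p q hp hq => simp only [map_add, hp, hq]
        | mul_X p j ih => rw [map_mul, rename_X, map_mul, optionEquivLeft_X_some, ih, map_mul]
      have hdecomp : s = ∑ e ∈ P.support,
          (X none : MvPolynomial (Option (Fin n)) k) ^ e * (rename some) (P.coeff e) := by
        apply (optionEquivLeft k (Fin n)).injective
        rw [map_sum]
        have : ∀ e ∈ P.support, (optionEquivLeft k (Fin n))
            ((X none : MvPolynomial (Option (Fin n)) k) ^ e * (rename some) (P.coeff e))
            = Polynomial.C (P.coeff e) * Polynomial.X ^ e := by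
          intro e _
          rw [map_mul, map_pow, optionEquivLeft_X_none, hrs, mul_comm]
        rw [Finset.sum_congr rfl this, ← hPdef]
        conv_lhs => rw [P.as_sum_support]
        exact Finset.sum_congr rfl fun e _ => (Polynomial.C_mul_X_pow_eq_monomial).symm
      have hte : ∀ (e : ℕ) (r : MvPolynomial (Option (Fin n ⊕ Fin n)) k),
          apAct tOp ((X none : MvPolynomial (Option (Fin n ⊕ Fin n)) k) ^ e) r
            = (X none) ^ e * r := by
        intro e
        induction e with
        | zero => intro r; rw [pow_zero, apAct_one, one_mul]
        | succ m ihm =>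
          intro r
          rw [pow_succ, apAct_mul _ tOp_comm, apAct_X _ tOp_comm, ihm]
          show (X none : MvPolynomial (Option (Fin n ⊕ Fin n)) k) ^ m * (X none * r) = _
          ring
      have hact : tAct (φ₀ s) G = ∑ e ∈ P.support,
          (X none : MvPolynomial (Option (Fin n ⊕ Fin n)) k) ^ e
            * theta k n (apContract (P.coeff e) F) := by
        conv_lhs => rw [hdecomp]
        rw [map_sum]
        unfold tAct
        rw [apAct_sum]
        refine Finset.sum_congr rfl fun e _ => ?_
        rw [map_mul, map_pow, show φ₀ (X (none : Option (Fin n)))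
          = (X none : MvPolynomial (Option (Fin n ⊕ Fin n)) k) by simp [hφ₀],
          hren, hcomp, apAct_mul _ tOp_comm, hte]
        congr 1
        rw [hG, hA2]
        exact tAct_embed _ F
      rw [hact] at h0
      -- kill the x-variables
      set E : MvPolynomial (Option (Fin n ⊕ Fin n)) k →ₐ[k]
          MvPolynomial (Option (Fin n ⊕ Fin n)) k :=
        aeval fun v : Option (Fin n ⊕ Fin n) =>
          (v.elim (X none) (Sum.elim (fun _ => 0) fun i => X (some (Sum.inr i))) :
            MvPolynomial (Option (Fin n ⊕ Fin n)) k) with hE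
      have hEθ : ∀ q : MvPolynomial (Fin n) k, E (theta k n q) = A2 q := by
        intro q
        have : E.comp (theta k n) = A2 := by
          apply MvPolynomial.algHom_ext
          intro i
          simp [hE, hA2, theta_X]
        exact congrFun (congrArg (DFunLike.coe) this) q
      have h2 : ∑ e ∈ P.support,
          (X none : MvPolynomial (Option (Fin n ⊕ Fin n)) k) ^ e
            * A2 (apContract (P.coeff e) F) = 0 := by
        have := congrArg E h0
        rw [map_sum, map_zero] at this
        rw [← this]
        refine Finset.sum_congr rfl fun e _ => ?_
        rw [map_mul, map_pow, show E (X (none : Option (Fin n ⊕ Fin n))) = X none by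
          simp [hE], hEθ]
      -- pass to polynomials in `t` and extract coefficients
      have hΨA : ∀ q : MvPolynomial (Fin n) k,
          (optionEquivLeft k (Fin n ⊕ Fin n)) (A2 q) = Polynomial.C (rename (Sum.inr : Fin n → Fin n ⊕ Fin n) q) := by
        intro q
        have : ((optionEquivLeft k (Fin n ⊕ Fin n)).toAlgHom.comp A2)
            = (Polynomial.CAlgHom (R := k)).comp (rename (Sum.inr : Fin n → Fin n ⊕ Fin n)) := by
          apply MvPolynomial.algHom_ext
          intro i
          simp [hA2, optionEquivLeft_X_some, Polynomial.CAlgHom]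
        exact congrFun (congrArg (DFunLike.coe) this) q
      have h3 : ∀ e ∈ P.support, apContract (P.coeff e) F = 0 := by
        intro e0 he0
        have h4 := congrArg (optionEquivLeft k (Fin n ⊕ Fin n)) h2
        rw [map_sum, map_zero] at h4
        have h5 : ∑ e ∈ P.support,
            Polynomial.C (rename (Sum.inr : Fin n → Fin n ⊕ Fin n) (apContract (P.coeff e) F)) * Polynomial.X ^ e
              = 0 := by
          rw [← h4]
          refine Finset.sum_congr rfl fun e _ => ?_
          rw [map_mul, map_pow, optionEquivLeft_X_none, hΨA, mul_comm]
        have h6 := congrArg (fun p => Polynomial.coeff p e0) h5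
        simp only [Polynomial.finset_sum_coeff, Polynomial.coeff_zero,
          Polynomial.coeff_C_mul, Polynomial.coeff_X_pow] at h6
        rw [Finset.sum_eq_single e0 (fun e _ hne => by simp [Ne.symm hne])
          (fun hne => absurd he0 hne)] at h6
        simp at h6
        apply rename_injective (Sum.inr : Fin n → Fin n ⊕ Fin n) Sum.inr_injective
        rw [h6, map_zero]
      rw [hdecomp]
      refine Submodule.sum_mem K fun e he => ?_
      refine Ideal.mul_mem_left _ _ ?_
      apply Ideal.subset_span
      exact ⟨P.coeff e, h3 e he, (hren (P.coeff e)).symm⟩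
    · -- easy direction : K annihilates
      intro hK
      refine Submodule.span_induction (p := fun x _ => tAct (φ₀ x) G = 0)
        ?_ ?_ ?_ ?_ hK
      · rintro x ⟨h, hh, rfl⟩
        rw [hcomp, hG]
        unfold tAct
        rw [show apAct tOp (A2 h) (theta k n F) = theta k n (apContract h F) from
          tAct_embed h F, hh, map_zero]
      · show tAct (φ₀ 0) G = 0
        rw [map_zero]; exact apAct_zero_left _ _
      · intro x y _ _ hx hy
        show tAct (φ₀ (x + y)) G = 0
        rw [map_add]
        unfold tAct at *
        rw [apAct_add, hx, hy, add_zero]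
      · intro a x _ hx
        show tAct (φ₀ (a • x)) G = 0
        rw [smul_eq_mul, map_mul]
        unfold tAct at *
        rw [apAct_mul _ tOp_comm, hx, apAct_zero_right]
  refine ⟨hsurj, hker, ?_⟩
  have e1 := Ideal.quotientKerAlgEquivOfSurjective hsurj
  exact ⟨(Ideal.quotientEquivAlgOfEq k hker.symm).trans e1⟩
end

section
/- Let F = x_1x_2x_4 − x_1x_5² + x_2x_3² + x_3x_5x_6 + x_4x_6² ∈ k[x_1,...,x_6] over a field k of characteristic 0. Then the tuple (F, ∂F/∂x_1, ..., ∂F/∂x_6, x_1, ..., x_6, 1) is linearly independent over k and spans the image of the evaluation map ev_F : k[α_1,...,α_6] → k[x_1,...,x_6]; in particular the apolar algebra Apolar(F) = k[α]/F^⊥ has k-dimension 14. -/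
open MvPolynomial

namespace ApolarAux
variable {k : Type*} [CommSemiring k] {σ : Type*}

/-- Composition of single operators along a multiset of indices. -/
noncomputable def Dop (op : σ → Module.End k (MvPolynomial σ k)) (s : Multiset σ) :
    Module.End k (MvPolynomial σ k) :=
  s.toList.foldr (fun i L => op i * L) 1

variable {op : σ → Module.End k (MvPolynomial σ k)}

lemma Dop_zero : Dop op (0 : Multiset σ) = 1 := by simp [Dop, Multiset.toList_zero]

section comm
variable (hcomm : ∀ i j, op i * op j = op j * op i)
include hcomm

lemma Dop_coe (l : List σ) :
    Dop op ↑l = l.foldr (fun i L => op i * L) 1 := by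
  have lc : LeftCommutative (fun (i : σ) (L : Module.End k (MvPolynomial σ k)) => op i * L) :=
    ⟨fun a b c => by rw [← mul_assoc, hcomm, mul_assoc]⟩
  exact List.Perm.foldr_eq (lcomm := lc)
    (Multiset.coe_eq_coe.mp (Multiset.coe_toList (l : Multiset σ))) 1

lemma Dop_cons (i : σ) (s : Multiset σ) : Dop op (i ::ₘ s) = op i * Dop op s := by
  conv_lhs => rw [← Multiset.coe_toList s]
  conv_rhs => rw [← Multiset.coe_toList s]
  rw [Multiset.cons_coe, Dop_coe hcomm, Dop_coe hcomm, List.foldr_cons]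

lemma Dop_add (s t : Multiset σ) : Dop op (s + t) = Dop op s * Dop op t := by
  induction s using Multiset.induction_on with
  | empty => simp [Dop_zero]
  | cons a s ih => rw [Multiset.cons_add, Dop_cons hcomm, Dop_cons hcomm, ih, mul_assoc]

lemma Dop_replicate (n : ℕ) (i : σ) : Dop op (Multiset.replicate n i) = op i ^ n := by
  induction n with
  | zero => simp [Dop_zero]
  | succ n ih => rw [Multiset.replicate_succ, Dop_cons hcomm, ih, ← pow_succ']

lemma opPow_eq_Dop (m : σ →₀ ℕ) : opPow op m = Dop op (Finsupp.toMultiset m) := by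
  have key : ∀ l : List σ, l.foldr (fun i L => op i ^ m i * L) 1
      = Dop op ((l.map fun i => Multiset.replicate (m i) i)).sum := by
    intro l; induction l with
    | nil => simp [Dop_zero]
    | cons a t ih =>
        rw [List.foldr_cons, ih, List.map_cons, List.sum_cons, Dop_add hcomm,
          Dop_replicate hcomm]
  rw [opPow, key]
  congr 1
  rw [Finsupp.toMultiset_apply, Finsupp.sum, Finset.sum, ← Finset.coe_toList m.support,
    Multiset.map_coe, Multiset.sum_coe]
  simp [Multiset.nsmul_singleton]

end comm

lemma opPow_zero (F : MvPolynomial σ k) : opPow op 0 F = F := by simp [opPow]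

lemma opPow_single_one (i : σ) : opPow op (Finsupp.single i 1) = op i := by
  rw [opPow, Finsupp.support_single_ne_zero _ one_ne_zero, Finset.toList_singleton]
  simp

lemma opPow_add (hcomm : ∀ i j, op i * op j = op j * op i) (m n : σ →₀ ℕ) :
    opPow op (m + n) = opPow op m * opPow op n := by
  rw [opPow_eq_Dop hcomm, opPow_eq_Dop hcomm, opPow_eq_Dop hcomm, Finsupp.toMultiset_add,
    Dop_add hcomm]

lemma apAct_def (h F : MvPolynomial σ k) :
    apAct op h F = Finsupp.sum (AddMonoidAlgebra.coeff h) fun m c => c • opPow op m F := by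
  rw [MvPolynomial.sum_def]; rfl

lemma apAct_zero_left (F : MvPolynomial σ k) : apAct op 0 F = 0 := by
  simp [apAct]

lemma apAct_add (p q F : MvPolynomial σ k) :
    apAct op (p + q) F = apAct op p F + apAct op q F := by
  rw [apAct_def, apAct_def, apAct_def]
  exact Finsupp.sum_add_index' (fun m => by simp) (fun m a b => add_smul a b _)

lemma apAct_smul (c : k) (p F : MvPolynomial σ k) :
    apAct op (c • p) F = c • apAct op p F := by
  rw [apAct_def, apAct_def]
  rw [show AddMonoidAlgebra.coeff (c • p) = c • AddMonoidAlgebra.coeff p from rfl]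
  rw [Finsupp.sum_smul_index' (h := fun m (a : k) => a • opPow op m F) (by simp)]
  rw [Finsupp.smul_sum]
  simp [mul_smul]

lemma apAct_monomial (m : σ →₀ ℕ) (c : k) (F : MvPolynomial σ k) :
    apAct op (monomial m c) F = c • opPow op m F := by
  classical
  rcases eq_or_ne c 0 with rfl | hc
  · simp [map_zero, apAct_zero_left]
  · rw [apAct, support_monomial, if_neg hc, Finset.sum_singleton, coeff_monomial, if_pos rfl]

lemma apAct_C (c : k) (F : MvPolynomial σ k) : apAct op (C c) F = c • F := by
  rw [show (C c : MvPolynomial σ k) = monomial 0 c from rfl, apAct_monomial]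
  congr 1
  exact opPow_zero F

lemma apAct_one (F : MvPolynomial σ k) : apAct op 1 F = F := by
  simpa using apAct_C (op := op) 1 F

lemma apAct_X (i : σ) (F : MvPolynomial σ k) : apAct op (X i) F = op i F := by
  rw [show (X i : MvPolynomial σ k) = monomial (Finsupp.single i 1) 1 from rfl,
    apAct_monomial, opPow_single_one, one_smul]

lemma apAct_monomial_two (hcomm : ∀ i j, op i * op j = op j * op i) (a b : σ) (c : k)
    (F : MvPolynomial σ k) :
    apAct op (monomial (Finsupp.single a 1 + Finsupp.single b 1) c) F
      = c • op a (op b F) := by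
  rw [apAct_monomial, opPow_add hcomm, opPow_single_one, opPow_single_one,
    Module.End.mul_apply]

lemma apAct_monomial_three (hcomm : ∀ i j, op i * op j = op j * op i) (a b d : σ) (c : k)
    (F : MvPolynomial σ k) :
    apAct op (monomial (Finsupp.single a 1 + Finsupp.single b 1 + Finsupp.single d 1) c) F
      = c • op a (op b (op d F)) := by
  rw [apAct_monomial, opPow_add hcomm, opPow_add hcomm, opPow_single_one, opPow_single_one,
    opPow_single_one, Module.End.mul_apply, Module.End.mul_apply]

lemma apAct_zero_right (h : MvPolynomial σ k) : apAct op h 0 = 0 := by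
  rw [apAct]
  refine Finset.sum_eq_zero fun m _ => ?_
  rw [map_zero, smul_zero]

section comm2
variable (hcomm : ∀ i j, op i * op j = op j * op i)
include hcomm

lemma apAct_X_mul (i : σ) (p F : MvPolynomial σ k) :
    apAct op (X i * p) F = op i (apAct op p F) := by
  induction p using MvPolynomial.induction_on' with
  | monomial m c =>
      rw [show (X i : MvPolynomial σ k) * monomial m c = monomial (Finsupp.single i 1 + m) c by
        rw [X, monomial_mul, one_mul]]
      rw [apAct_monomial, apAct_monomial, opPow_add hcomm, opPow_single_one,
        Module.End.mul_apply, map_smul]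
  | add p q ihp ihq => rw [mul_add, apAct_add, ihp, ihq, apAct_add, map_add]

lemma apAct_mul (p q F : MvPolynomial σ k) :
    apAct op (p * q) F = apAct op p (apAct op q F) := by
  induction p using MvPolynomial.induction_on with
  | C a => rw [← smul_eq_C_mul, apAct_smul, apAct_C]
  | add p1 p2 ih1 ih2 => rw [add_mul, apAct_add, ih1, ih2, apAct_add]
  | mul_X p i ih =>
      rw [show p * X i * q = X i * (p * q) by ring, apAct_X_mul hcomm, ih,
        ← apAct_X_mul hcomm, show (X i : MvPolynomial σ k) * p = p * X i by ring]

end comm2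

lemma opPow_apply_mem {W : Submodule k (MvPolynomial σ k)}
    (hop : ∀ i, ∀ x ∈ W, op i x ∈ W) {F : MvPolynomial σ k} (hF : F ∈ W) (m : σ →₀ ℕ) :
    opPow op m F ∈ W := by
  have hpow : ∀ (i : σ) (n : ℕ), ∀ x ∈ W, (op i ^ n) x ∈ W := by
    intro i n
    induction n with
    | zero => intro x hx; simpa using hx
    | succ n ih => intro x hx; rw [pow_succ, Module.End.mul_apply]; exact ih _ (hop i x hx)
  rw [opPow]
  generalize m.support.toList = l
  induction l with
  | nil => simpa using hF
  | cons a t ih => rw [List.foldr_cons, Module.End.mul_apply]; exact hpow a _ _ ih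

lemma apAct_mem {W : Submodule k (MvPolynomial σ k)}
    (hop : ∀ i, ∀ x ∈ W, op i x ∈ W) {F : MvPolynomial σ k} (hF : F ∈ W)
    (h : MvPolynomial σ k) : apAct op h F ∈ W := by
  rw [apAct]
  exact Submodule.sum_mem _ fun m _ => Submodule.smul_mem _ _ (opPow_apply_mem hop hF m)

lemma pderiv_pderiv_comm [DecidableEq σ] (i j : σ) (p : MvPolynomial σ k) :
    pderiv i (pderiv j p) = pderiv j (pderiv i p) := by
  induction p using MvPolynomial.induction_on with
  | C a => simp [pderiv_C]
  | add p q hp hq => simp [map_add, hp, hq]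
  | mul_X q l hq =>
      rcases eq_or_ne i l with rfl | hil
      · rcases eq_or_ne j i with rfl | hjl
        · rfl
        · simp [pderiv_mul, hq, pderiv_X, Pi.single_apply, hjl]; ring
      · rcases eq_or_ne j l with rfl | hjl
        · simp [pderiv_mul, hq, pderiv_X, Pi.single_apply, hil]; ring
        · simp [pderiv_mul, hq, pderiv_X, Pi.single_apply, hil, hjl]

end ApolarAux

set_option maxHeartbeats 4000000 in
/-- For the explicit cubic `F = x_1x_2x_4 − x_1x_5² + x_2x_3² + x_3x_5x_6 + x_4x_6²`
(variables indexed by `Fin 6`, so `x_{i+1} = X i`), the tuple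
`(F, ∂F/∂x_1, …, ∂F/∂x_6, x_1, …, x_6, 1)` is linearly independent over `k` and spans the
image of the evaluation map `ev_F : h ↦ h ∘ F`; in particular the apolar algebra
`Apolar(F) = k[α]/F^⊥` has `k`-dimension 14. -/
theorem explicit_cubic_apolar_dim_fourteen {k : Type*} [Field k] [CharZero k]
    (F : MvPolynomial (Fin 6) k)
    (hFdef : F = X 0 * X 1 * X 3 - X 0 * X 4 ^ 2 + X 1 * X 2 ^ 2
      + X 2 * X 4 * X 5 + X 3 * X 5 ^ 2)
    (v : Unit ⊕ Fin 6 ⊕ Fin 6 ⊕ Unit → MvPolynomial (Fin 6) k)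
    (hv : v = Sum.elim (fun _ => F) (Sum.elim (fun i => pderiv i F)
      (Sum.elim (fun i => X i) (fun _ => 1)))) :
    LinearIndependent k v
      ∧ (Submodule.span k (Set.range v) : Set (MvPolynomial (Fin 6) k))
          = Set.range (fun h => apContract h F)
      ∧ Module.finrank k
          (MvPolynomial (Fin 6) k ⧸
            Ideal.span {h : MvPolynomial (Fin 6) k | apContract h F = 0}) = 14 := by
  have hv0 : v (Sum.inl ()) = F := by rw [hv, Sum.elim_inl]
  have hv1 : ∀ i, v (Sum.inr (Sum.inl i)) = pderiv i F := fun i => by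
    rw [hv, Sum.elim_inr, Sum.elim_inl]
  have hv2 : ∀ i, v (Sum.inr (Sum.inr (Sum.inl i))) = X i := fun i => by
    rw [hv, Sum.elim_inr, Sum.elim_inr, Sum.elim_inl]
  have hv3 : v (Sum.inr (Sum.inr (Sum.inr ()))) = 1 := by
    rw [hv, Sum.elim_inr, Sum.elim_inr, Sum.elim_inr]
  set op : Fin 6 → Module.End k (MvPolynomial (Fin 6) k) :=
    fun i => (pderiv i).toLinearMap with hopdef
  have hopapp : ∀ (i : Fin 6) (p : MvPolynomial (Fin 6) k), op i p = pderiv i p :=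
    fun _ _ => rfl
  have hcomm : ∀ i j, op i * op j = op j * op i := fun i j =>
    LinearMap.ext fun p => ApolarAux.pderiv_pderiv_comm i j p
  have hcontract : ∀ h G : MvPolynomial (Fin 6) k, apContract h G = apAct op h G :=
    fun _ _ => rfl
  let L : MvPolynomial (Fin 6) k →ₗ[k] MvPolynomial (Fin 6) k :=
    { toFun := fun h => apAct op h F
      map_add' := fun p q => ApolarAux.apAct_add p q F
      map_smul' := fun c p => ApolarAux.apAct_smul c p F }
  have hLapp : ∀ h, L h = apContract h F := fun _ => rfl
  have Hess : ∀ i j : Fin 6, ∃ cl : k × Fin 6, pderiv i (pderiv j F) = cl.1 • X cl.2 := by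
    intro i j
    fin_cases i <;> fin_cases j
    exacts [
      ⟨((0 : k), (0 : Fin 6)), by rw [hFdef]; simp [pderiv_mul, pow_two, smul_eq_C_mul, map_ofNat]; try ring⟩,
      ⟨((1 : k), (3 : Fin 6)), by rw [hFdef]; simp [pderiv_mul, pow_two, smul_eq_C_mul, map_ofNat]; try ring⟩,
      ⟨((0 : k), (0 : Fin 6)), by rw [hFdef]; simp [pderiv_mul, pow_two, smul_eq_C_mul, map_ofNat]; try ring⟩,
      ⟨((1 : k), (1 : Fin 6)), by rw [hFdef]; simp [pderiv_mul, pow_two, smul_eq_C_mul, map_ofNat]; try ring⟩,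
      ⟨((-2 : k), (4 : Fin 6)), by rw [hFdef]; simp [pderiv_mul, pow_two, smul_eq_C_mul, map_ofNat]; try ring⟩,
      ⟨((0 : k), (0 : Fin 6)), by rw [hFdef]; simp [pderiv_mul, pow_two, smul_eq_C_mul, map_ofNat]; try ring⟩,
      ⟨((1 : k), (3 : Fin 6)), by rw [hFdef]; simp [pderiv_mul, pow_two, smul_eq_C_mul, map_ofNat]; try ring⟩,
      ⟨((0 : k), (0 : Fin 6)), by rw [hFdef]; simp [pderiv_mul, pow_two, smul_eq_C_mul, map_ofNat]; try ring⟩,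
      ⟨((2 : k), (2 : Fin 6)), by rw [hFdef]; simp [pderiv_mul, pow_two, smul_eq_C_mul, map_ofNat]; try ring⟩,
      ⟨((1 : k), (0 : Fin 6)), by rw [hFdef]; simp [pderiv_mul, pow_two, smul_eq_C_mul, map_ofNat]; try ring⟩,
      ⟨((0 : k), (0 : Fin 6)), by rw [hFdef]; simp [pderiv_mul, pow_two, smul_eq_C_mul, map_ofNat]; try ring⟩,
      ⟨((0 : k), (0 : Fin 6)), by rw [hFdef]; simp [pderiv_mul, pow_two, smul_eq_C_mul, map_ofNat]; try ring⟩,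
      ⟨((0 : k), (0 : Fin 6)), by rw [hFdef]; simp [pderiv_mul, pow_two, smul_eq_C_mul, map_ofNat]; try ring⟩,
      ⟨((2 : k), (2 : Fin 6)), by rw [hFdef]; simp [pderiv_mul, pow_two, smul_eq_C_mul, map_ofNat]; try ring⟩,
      ⟨((2 : k), (1 : Fin 6)), by rw [hFdef]; simp [pderiv_mul, pow_two, smul_eq_C_mul, map_ofNat]; try ring⟩,
      ⟨((0 : k), (0 : Fin 6)), by rw [hFdef]; simp [pderiv_mul, pow_two, smul_eq_C_mul, map_ofNat]; try ring⟩,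
      ⟨((1 : k), (5 : Fin 6)), by rw [hFdef]; simp [pderiv_mul, pow_two, smul_eq_C_mul, map_ofNat]; try ring⟩,
      ⟨((1 : k), (4 : Fin 6)), by rw [hFdef]; simp [pderiv_mul, pow_two, smul_eq_C_mul, map_ofNat]; try ring⟩,
      ⟨((1 : k), (1 : Fin 6)), by rw [hFdef]; simp [pderiv_mul, pow_two, smul_eq_C_mul, map_ofNat]; try ring⟩,
      ⟨((1 : k), (0 : Fin 6)), by rw [hFdef]; simp [pderiv_mul, pow_two, smul_eq_C_mul, map_ofNat]; try ring⟩,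
      ⟨((0 : k), (0 : Fin 6)), by rw [hFdef]; simp [pderiv_mul, pow_two, smul_eq_C_mul, map_ofNat]; try ring⟩,
      ⟨((0 : k), (0 : Fin 6)), by rw [hFdef]; simp [pderiv_mul, pow_two, smul_eq_C_mul, map_ofNat]; try ring⟩,
      ⟨((0 : k), (0 : Fin 6)), by rw [hFdef]; simp [pderiv_mul, pow_two, smul_eq_C_mul, map_ofNat]; try ring⟩,
      ⟨((2 : k), (5 : Fin 6)), by rw [hFdef]; simp [pderiv_mul, pow_two, smul_eq_C_mul, map_ofNat]; try ring⟩,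
      ⟨((-2 : k), (4 : Fin 6)), by rw [hFdef]; simp [pderiv_mul, pow_two, smul_eq_C_mul, map_ofNat]; try ring⟩,
      ⟨((0 : k), (0 : Fin 6)), by rw [hFdef]; simp [pderiv_mul, pow_two, smul_eq_C_mul, map_ofNat]; try ring⟩,
      ⟨((1 : k), (5 : Fin 6)), by rw [hFdef]; simp [pderiv_mul, pow_two, smul_eq_C_mul, map_ofNat]; try ring⟩,
      ⟨((0 : k), (0 : Fin 6)), by rw [hFdef]; simp [pderiv_mul, pow_two, smul_eq_C_mul, map_ofNat]; try ring⟩,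
      ⟨((-2 : k), (0 : Fin 6)), by rw [hFdef]; simp [pderiv_mul, pow_two, smul_eq_C_mul, map_ofNat]; try ring⟩,
      ⟨((1 : k), (2 : Fin 6)), by rw [hFdef]; simp [pderiv_mul, pow_two, smul_eq_C_mul, map_ofNat]; try ring⟩,
      ⟨((0 : k), (0 : Fin 6)), by rw [hFdef]; simp [pderiv_mul, pow_two, smul_eq_C_mul, map_ofNat]; try ring⟩,
      ⟨((0 : k), (0 : Fin 6)), by rw [hFdef]; simp [pderiv_mul, pow_two, smul_eq_C_mul, map_ofNat]; try ring⟩,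
      ⟨((1 : k), (4 : Fin 6)), by rw [hFdef]; simp [pderiv_mul, pow_two, smul_eq_C_mul, map_ofNat]; try ring⟩,
      ⟨((2 : k), (5 : Fin 6)), by rw [hFdef]; simp [pderiv_mul, pow_two, smul_eq_C_mul, map_ofNat]; try ring⟩,
      ⟨((1 : k), (2 : Fin 6)), by rw [hFdef]; simp [pderiv_mul, pow_two, smul_eq_C_mul, map_ofNat]; try ring⟩,
      ⟨((2 : k), (3 : Fin 6)), by rw [hFdef]; simp [pderiv_mul, pow_two, smul_eq_C_mul, map_ofNat]; try ring⟩]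
  set W : Submodule k (MvPolynomial (Fin 6) k) := Submodule.span k (Set.range v) with hWdef
  have hFW : F ∈ W := Submodule.subset_span ⟨Sum.inl (), hv0⟩
  have hDW : ∀ i, pderiv i F ∈ W := fun i => Submodule.subset_span ⟨_, hv1 i⟩
  have hXW : ∀ i, (X i : MvPolynomial (Fin 6) k) ∈ W :=
    fun i => Submodule.subset_span ⟨_, hv2 i⟩
  have h1W : (1 : MvPolynomial (Fin 6) k) ∈ W := Submodule.subset_span ⟨_, hv3⟩
  have hstab : ∀ i : Fin 6, ∀ x ∈ W, op i x ∈ W := by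
    intro i x hx
    induction hx using Submodule.span_induction with
    | mem x hxx =>
        obtain ⟨j, rfl⟩ := hxx
        rcases j with ⟨⟩ | j | j | ⟨⟩
        · rw [hopapp, hv0]; exact hDW i
        · rw [hopapp, hv1]
          obtain ⟨⟨c, l⟩, e⟩ := Hess i j
          rw [e]
          exact Submodule.smul_mem _ _ (hXW l)
        · rw [hopapp, hv2]
          rcases eq_or_ne j i with rfl | hne
          · rw [pderiv_X_self]; exact h1W
          · rw [pderiv_X_of_ne hne]; exact zero_mem W
        · rw [hopapp, hv3, pderiv_one]; exact zero_mem W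
    | zero => rw [map_zero]; exact zero_mem W
    | add x y hx hy ihx ihy => rw [map_add]; exact add_mem ihx ihy
    | smul a x hx ihx => rw [map_smul]; exact Submodule.smul_mem _ _ ihx
  -- Part 2 : the span equals the range of the contraction map
  have hWrange : (W : Set (MvPolynomial (Fin 6) k))
      = Set.range (fun h => apContract h F) := by
    apply Set.Subset.antisymm
    · intro x hx
      have hle : W ≤ LinearMap.range L := by
        rw [hWdef]
        refine Submodule.span_le.mpr ?_
        rintro x ⟨j, rfl⟩
        rcases j with ⟨⟩ | j | j | ⟨⟩
        · exact ⟨1, by rw [hLapp, hcontract, ApolarAux.apAct_one, hv0]⟩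
        · exact ⟨X j, by
            rw [hLapp, hcontract, ApolarAux.apAct_X, hopapp, hv1]⟩
        · fin_cases j
          · exact ⟨monomial (Finsupp.single 1 1 + Finsupp.single 3 1) 1, by
              rw [hLapp, hcontract, ApolarAux.apAct_monomial_two hcomm, hopapp, hopapp, hv2,
                hFdef]
              simp [pderiv_mul, pow_two]⟩
          · exact ⟨monomial (Finsupp.single 0 1 + Finsupp.single 3 1) 1, by
              rw [hLapp, hcontract, ApolarAux.apAct_monomial_two hcomm, hopapp, hopapp, hv2,
                hFdef]
              simp [pderiv_mul, pow_two]⟩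
          · exact ⟨monomial (Finsupp.single 4 1 + Finsupp.single 5 1) 1, by
              rw [hLapp, hcontract, ApolarAux.apAct_monomial_two hcomm, hopapp, hopapp, hv2,
                hFdef]
              simp [pderiv_mul, pow_two]⟩
          · exact ⟨monomial (Finsupp.single 0 1 + Finsupp.single 1 1) 1, by
              rw [hLapp, hcontract, ApolarAux.apAct_monomial_two hcomm, hopapp, hopapp, hv2,
                hFdef]
              simp [pderiv_mul, pow_two]⟩
          · exact ⟨monomial (Finsupp.single 2 1 + Finsupp.single 5 1) 1, by
              rw [hLapp, hcontract, ApolarAux.apAct_monomial_two hcomm, hopapp, hopapp, hv2,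
                hFdef]
              simp [pderiv_mul, pow_two]⟩
          · exact ⟨monomial (Finsupp.single 2 1 + Finsupp.single 4 1) 1, by
              rw [hLapp, hcontract, ApolarAux.apAct_monomial_two hcomm, hopapp, hopapp, hv2,
                hFdef]
              simp [pderiv_mul, pow_two]⟩
        · exact ⟨monomial (Finsupp.single 0 1 + Finsupp.single 1 1 + Finsupp.single 3 1) 1, by
            rw [hLapp, hcontract, ApolarAux.apAct_monomial_three hcomm, hopapp, hopapp, hopapp,
              hv3, hFdef]
            simp [pderiv_mul, pow_two]⟩
      obtain ⟨h, hh⟩ := hle hx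
      exact ⟨h, by show apContract h F = x; rw [← hLapp]; exact hh⟩
    · rintro x ⟨h, rfl⟩
      simp only
      rw [hcontract]
      exact ApolarAux.apAct_mem hstab hFW h
  -- Part 1 : linear independence
  have hind : LinearIndependent k v := by
    refine Fintype.linearIndependent_iff.mpr fun g hg => ?_
    simp only [Fintype.sum_sum_type, Fin.sum_univ_six, Finset.univ_unique,
      Finset.sum_singleton] at hg
    simp only [hv0, hv1, hv2, hv3] at hg
    rw [hFdef] at hg
    simp only [smul_eq_C_mul] at hg
    have e1 : g (Sum.inl ()) = 0 := by
      have t := congrArg (fun p => constantCoeff (pderiv (R := k) 0 (pderiv 1 (pderiv 3 p)))) hg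
      simpa [pderiv_mul, pderiv_C_mul, pow_two, map_ofNat] using t
    have e2 : g (Sum.inr (Sum.inl 0)) = 0 := by
      have t := congrArg (fun p => constantCoeff (pderiv (R := k) 1 (pderiv 3 p))) hg
      simpa [pderiv_mul, pderiv_C_mul, pow_two, map_ofNat] using t
    have e3 : g (Sum.inr (Sum.inl 1)) = 0 := by
      have t := congrArg (fun p => constantCoeff (pderiv (R := k) 0 (pderiv 3 p))) hg
      simpa [pderiv_mul, pderiv_C_mul, pow_two, map_ofNat] using t
    have e4 : g (Sum.inr (Sum.inl 2)) = 0 := by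
      have t := congrArg (fun p => constantCoeff (pderiv (R := k) 1 (pderiv 2 p))) hg
      simpa [pderiv_mul, pderiv_C_mul, pow_two, map_ofNat] using t
    have e5 : g (Sum.inr (Sum.inl 3)) = 0 := by
      have t := congrArg (fun p => constantCoeff (pderiv (R := k) 0 (pderiv 1 p))) hg
      simpa [pderiv_mul, pderiv_C_mul, pow_two, map_ofNat] using t
    have e6 : g (Sum.inr (Sum.inl 4)) = 0 := by
      have t := congrArg (fun p => constantCoeff (pderiv (R := k) 0 (pderiv 4 p))) hg
      simpa [pderiv_mul, pderiv_C_mul, pow_two, map_ofNat] using t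
    have e7 : g (Sum.inr (Sum.inl 5)) = 0 := by
      have t := congrArg (fun p => constantCoeff (pderiv (R := k) 2 (pderiv 4 p))) hg
      simpa [pderiv_mul, pderiv_C_mul, pow_two, map_ofNat] using t
    have e8 : g (Sum.inr (Sum.inr (Sum.inl 0))) = 0 := by
      have t := congrArg (fun p => constantCoeff (pderiv (R := k) 0 p)) hg
      simpa [pderiv_mul, pderiv_C_mul, pow_two, map_ofNat, e2, e3, e5, e6] using t
    have e9 : g (Sum.inr (Sum.inr (Sum.inl 1))) = 0 := by
      have t := congrArg (fun p => constantCoeff (pderiv (R := k) 1 p)) hg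
      simpa [pderiv_mul, pderiv_C_mul, pow_two, map_ofNat, e2, e4, e5] using t
    have e10 : g (Sum.inr (Sum.inr (Sum.inl 2))) = 0 := by
      have t := congrArg (fun p => constantCoeff (pderiv (R := k) 2 p)) hg
      simpa [pderiv_mul, pderiv_C_mul, pow_two, map_ofNat, e4, e6, e7] using t
    have e11 : g (Sum.inr (Sum.inr (Sum.inl 3))) = 0 := by
      have t := congrArg (fun p => constantCoeff (pderiv (R := k) 3 p)) hg
      simpa [pderiv_mul, pderiv_C_mul, pow_two, map_ofNat, e2, e3, e7] using t
    have e12 : g (Sum.inr (Sum.inr (Sum.inl 4))) = 0 := by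
      have t := congrArg (fun p => constantCoeff (pderiv (R := k) 4 p)) hg
      simpa [pderiv_mul, pderiv_C_mul, pow_two, map_ofNat, e2, e4, e6, e7] using t
    have e13 : g (Sum.inr (Sum.inr (Sum.inl 5))) = 0 := by
      have t := congrArg (fun p => constantCoeff (pderiv (R := k) 5 p)) hg
      simpa [pderiv_mul, pderiv_C_mul, pow_two, map_ofNat, e4, e6, e7] using t
    have e14 : g (Sum.inr (Sum.inr (Sum.inr ()))) = 0 := by
      have t := congrArg (fun p => constantCoeff (R := k) (σ := Fin 6) p) hg
      simpa [pow_two, map_ofNat, e8, e9, e10, e11, e12, e13] using t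
    intro j
    rcases j with ⟨⟩ | j | j | ⟨⟩
    · exact e1
    · fin_cases j <;> assumption
    · fin_cases j <;> assumption
    · exact e14
  -- Part 3 : the dimension of the apolar algebra
  refine ⟨hind, hWrange, ?_⟩
  have hmul0 : ∀ gq h : MvPolynomial (Fin 6) k,
      apContract h F = 0 → apContract (gq * h) F = 0 := by
    intro gq h hh
    rw [hcontract, ApolarAux.apAct_mul hcomm, ← hcontract h, hh]
    exact ApolarAux.apAct_zero_right gq
  let J : Ideal (MvPolynomial (Fin 6) k) :=
    { carrier := {h : MvPolynomial (Fin 6) k | apContract h F = 0}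
      add_mem' := fun {a b} ha hb => by
        simp only [Set.mem_setOf_eq, hcontract] at *
        rw [ApolarAux.apAct_add, ha, hb, add_zero]
      zero_mem' := by
        simp only [Set.mem_setOf_eq, hcontract]
        exact ApolarAux.apAct_zero_left F
      smul_mem' := fun c x hx => by simpa [smul_eq_mul] using hmul0 c x hx }
  have hJ : Ideal.span {h : MvPolynomial (Fin 6) k | apContract h F = 0} = J :=
    le_antisymm (Ideal.span_le.mpr fun x hx => hx) Ideal.subset_span
  rw [hJ]
  have hker : Submodule.restrictScalars k J = LinearMap.ker L := by
    ext x
    simp only [Submodule.restrictScalars_mem, LinearMap.mem_ker]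
    exact Iff.rfl
  have eq2 := Submodule.Quotient.restrictScalarsEquiv k J
  rw [hker] at eq2
  have eq3 := L.quotKerEquivRange
  have hWeq : LinearMap.range L = W := by
    apply SetLike.ext'
    have hfun : (fun h => apContract h F) = ⇑L := funext fun h => (hLapp h).symm
    rw [LinearMap.coe_range, hWrange, hfun]
  rw [← eq2.finrank_eq, eq3.finrank_eq, hWeq, hWdef,
    finrank_span_eq_card hind]
  simp
end
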